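/- Let μ : Ω → ℝ be a bounded measurable function, α ∈ (0,1), ε > 0, and U be a random variable uniform on [0, ε], independent of everything else. Define R_α = sup over measurable h : Ω → [0,1] with E[h] = 1−α of (1/(1−α))·E[h·μ], and R_{α,ε} the analogous supremum where μ is replaced by μ + U and h may additionally depend on U. Then R_α ≤ R_{α,ε} ≤ R_α + ε. -/

import Mathlib

open MeasureTheory ENNReal Set

private lemma integrable_of_bdd {X : Type*} [MeasurableSpace X] {Q : Measure X}
    [IsFiniteMeasure Q] {f : X → ℝ} (hf : Measurable f) {C : ℝ}
    (hC : ∀ᵐ x ∂Q, ‖f x‖ ≤ C) : Integrable f Q :=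
  Integrable.mono' (integrable_const C) hf.aestronglyMeasurable hC

/-- Bias bound for the noise-augmentation procedure: adding independent
`Uniform(0,ε)` noise to the (bounded) conditional expected loss never decreases
the worst-case risk and increases it by at most `ε`. -/
theorem stmt_4 {Ω : Type*} [MeasurableSpace Ω] (P : Measure Ω) [IsProbabilityMeasure P]
    (μ : Ω → ℝ) (hμm : Measurable μ) (hμb : ∃ M : ℝ, ∀ ω, |μ ω| ≤ M)
    (α : ℝ) (hα : α ∈ Ioo (0 : ℝ) 1) (ε : ℝ) (hε : 0 < ε)
    (ν : Measure ℝ) (hν : ν = (ENNReal.ofReal ε)⁻¹ • (volume.restrict (Icc (0 : ℝ) ε)))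
    [IsProbabilityMeasure ν]
    (Rα Rαε : ℝ)
    (hRα : Rα = sSup {r : ℝ | ∃ h : Ω → ℝ, Measurable h ∧ (∀ ω, h ω ∈ Icc (0 : ℝ) 1) ∧
        (∫ ω, h ω ∂P) = 1 - α ∧ r = (1 - α)⁻¹ * ∫ ω, h ω * μ ω ∂P})
    (hRαε : Rαε = sSup {r : ℝ | ∃ h : Ω × ℝ → ℝ, Measurable h ∧
        (∀ p, h p ∈ Icc (0 : ℝ) 1) ∧
        (∫ p, h p ∂(P.prod ν)) = 1 - α ∧
        r = (1 - α)⁻¹ * ∫ p, h p * (μ p.1 + p.2) ∂(P.prod ν)}) :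
    Rα ≤ Rαε ∧ Rαε ≤ Rα + ε := by
  obtain ⟨M, hM⟩ := hμb
  obtain ⟨hα0, hα1⟩ := hα
  have h1α : (0:ℝ) < 1 - α := by linarith
  have h1αinv : (0:ℝ) < (1 - α)⁻¹ := inv_pos.mpr h1α
  set S1 : Set ℝ := {r : ℝ | ∃ h : Ω → ℝ, Measurable h ∧ (∀ ω, h ω ∈ Icc (0 : ℝ) 1) ∧
      (∫ ω, h ω ∂P) = 1 - α ∧ r = (1 - α)⁻¹ * ∫ ω, h ω * μ ω ∂P} with hS1
  set S2 : Set ℝ := {r : ℝ | ∃ h : Ω × ℝ → ℝ, Measurable h ∧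
      (∀ p, h p ∈ Icc (0 : ℝ) 1) ∧
      (∫ p, h p ∂(P.prod ν)) = 1 - α ∧
      r = (1 - α)⁻¹ * ∫ p, h p * (μ p.1 + p.2) ∂(P.prod ν)} with hS2
  -- a.e. facts about ν
  have hνae : ∀ᵐ u ∂ν, u ∈ Icc (0:ℝ) ε := by
    rw [hν]
    exact Measure.ae_smul_measure (ae_restrict_mem measurableSet_Icc) _
  have hsnd : Measure.map Prod.snd (P.prod ν) = ν := by
    rw [Measure.map_snd_prod, measure_univ, one_smul]
  have hprodae : ∀ᵐ p ∂(P.prod ν), p.2 ∈ Icc (0:ℝ) ε := by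
    apply ae_of_ae_map measurable_snd.aemeasurable
    rw [hsnd]; exact hνae
  have hM0 : 0 ≤ M := le_trans (abs_nonneg _) (hM (Classical.choice
    (by
      by_contra hne
      have : P univ = 0 := by
        have : (univ : Set Ω) = ∅ := by
          simp only [eq_empty_iff_forall_notMem]
          exact fun x _ => hne ⟨x⟩
        simp [this]
      simp [measure_univ] at this)))
  -- boundedness of S1
  have bdd1 : BddAbove S1 := by
    refine ⟨(1-α)⁻¹ * M, fun r hr => ?_⟩
    obtain ⟨h, hm, hb, hint, rfl⟩ := hr
    have hIb : ‖∫ ω, h ω * μ ω ∂P‖ ≤ M * (P univ).toReal := by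
      apply norm_integral_le_of_norm_le_const
      filter_upwards with ω
      have h0 := (hb ω).1; have h1 := (hb ω).2
      calc ‖h ω * μ ω‖ = h ω * |μ ω| := by
            rw [norm_mul, Real.norm_eq_abs, Real.norm_eq_abs, abs_of_nonneg h0]
        _ ≤ 1 * M := by
            exact mul_le_mul h1 (hM ω) (abs_nonneg _) zero_le_one
        _ = M := one_mul M
    rw [measure_univ, ENNReal.toReal_one, mul_one] at hIb
    have := (abs_le.mp (by rwa [Real.norm_eq_abs] at hIb)).2
    exact mul_le_mul_of_nonneg_left this (le_of_lt h1αinv)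
  -- boundedness of S2
  have bdd2 : BddAbove S2 := by
    refine ⟨(1-α)⁻¹ * (M + ε), fun r hr => ?_⟩
    obtain ⟨h, hm, hb, hint, rfl⟩ := hr
    have hIb : ‖∫ p, h p * (μ p.1 + p.2) ∂(P.prod ν)‖ ≤ (M + ε) * ((P.prod ν) univ).toReal := by
      apply norm_integral_le_of_norm_le_const
      filter_upwards [hprodae] with p hp
      have h0 := (hb p).1; have h1 := (hb p).2
      calc ‖h p * (μ p.1 + p.2)‖ = h p * |μ p.1 + p.2| := by
            rw [norm_mul, Real.norm_eq_abs, Real.norm_eq_abs, abs_of_nonneg h0]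
        _ ≤ 1 * (M + ε) := by
            apply mul_le_mul h1 _ (abs_nonneg _) zero_le_one
            calc |μ p.1 + p.2| ≤ |μ p.1| + |p.2| := abs_add_le _ _
              _ ≤ M + ε := add_le_add (hM p.1) (by
                  rw [abs_of_nonneg hp.1]; exact hp.2)
        _ = M + ε := one_mul _
    rw [measure_univ, ENNReal.toReal_one, mul_one] at hIb
    have := (abs_le.mp (by rwa [Real.norm_eq_abs] at hIb)).2
    exact mul_le_mul_of_nonneg_left this (le_of_lt h1αinv)
  -- nonemptiness of S1
  have ne1 : S1.Nonempty := by
    refine ⟨(1-α)⁻¹ * ∫ ω, (1-α) * μ ω ∂P, fun _ => 1-α, measurable_const,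
      fun ω => ⟨le_of_lt h1α, by show (1:ℝ)-α ≤ 1; linarith⟩, by simp, rfl⟩
  -- nonemptiness of S2
  have ne2 : S2.Nonempty := by
    refine ⟨(1-α)⁻¹ * ∫ p, (1-α) * (μ p.1 + p.2) ∂(P.prod ν), fun _ => 1-α, measurable_const,
      fun p => ⟨le_of_lt h1α, by show (1:ℝ)-α ≤ 1; linarith⟩, by simp, rfl⟩
  constructor
  · -- Rα ≤ Rαε
    rw [hRα, hRαε]
    apply csSup_le ne1
    intro r hr
    obtain ⟨h, hm, hb, hint, rfl⟩ := hr
    set h' : Ω × ℝ → ℝ := fun p => h p.1 with hh'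
    have hm' : Measurable h' := hm.comp measurable_fst
    have hint1 : Integrable h' (P.prod ν) := by
      apply integrable_of_bdd hm'
      filter_upwards with p
      rw [Real.norm_eq_abs, abs_of_nonneg (hb p.1).1]; exact (hb p.1).2
    have hint2 : Integrable (fun p : Ω × ℝ => h' p * (μ p.1 + p.2)) (P.prod ν) := by
      apply integrable_of_bdd (hm'.mul ((hμm.comp measurable_fst).add measurable_snd))
      filter_upwards [hprodae] with p hp
      show ‖h p.1 * (μ p.1 + p.2)‖ ≤ _
      rw [Real.norm_eq_abs, abs_mul, abs_of_nonneg (hb p.1).1]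
      calc h p.1 * |μ p.1 + p.2| ≤ 1 * (M + ε) := by
            apply mul_le_mul (hb p.1).2 _ (abs_nonneg _) zero_le_one
            calc |μ p.1 + p.2| ≤ |μ p.1| + |p.2| := abs_add_le _ _
              _ ≤ M + ε := add_le_add (hM p.1) (by rw [abs_of_nonneg hp.1]; exact hp.2)
        _ = M + ε := one_mul _
    have heq1 : (∫ p, h' p ∂(P.prod ν)) = 1 - α := by
      rw [integral_prod _ hint1]
      simp only [hh']
      rw [← hint]
      congr 1
      ext ω
      simp
    have hle : (∫ ω, h ω * μ ω ∂P) ≤ ∫ p, h' p * (μ p.1 + p.2) ∂(P.prod ν) := by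
      have hμint : Integrable (fun p : Ω × ℝ => h' p * μ p.1) (P.prod ν) := by
        apply integrable_of_bdd (hm'.mul (hμm.comp measurable_fst))
        filter_upwards with p
        show ‖h p.1 * μ p.1‖ ≤ _
        rw [Real.norm_eq_abs, abs_mul, abs_of_nonneg (hb p.1).1]
        calc h p.1 * |μ p.1| ≤ 1 * M :=
              mul_le_mul (hb p.1).2 (hM p.1) (abs_nonneg _) zero_le_one
          _ = M := one_mul M
      have hsplit : (∫ p, h' p * (μ p.1 + p.2) ∂(P.prod ν)) =
          (∫ p, h' p * μ p.1 ∂(P.prod ν)) + ∫ p, h' p * p.2 ∂(P.prod ν) := by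
        rw [← integral_add hμint]
        · congr 1; ext p; ring
        · have := hint2.sub hμint
          apply this.congr
          filter_upwards with p
          simp only [Pi.sub_apply]
          ring
      have hfst : (∫ p, h' p * μ p.1 ∂(P.prod ν)) = ∫ ω, h ω * μ ω ∂P := by
        rw [integral_prod _ hμint]
        congr 1
        ext ω
        simp [hh']
      have hpos : 0 ≤ ∫ p, h' p * p.2 ∂(P.prod ν) := by
        apply integral_nonneg_of_ae
        filter_upwards [hprodae] with p hp
        exact mul_nonneg (hb p.1).1 hp.1
      rw [hsplit, hfst]
      linarith
    calc (1-α)⁻¹ * ∫ ω, h ω * μ ω ∂P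
        ≤ (1-α)⁻¹ * ∫ p, h' p * (μ p.1 + p.2) ∂(P.prod ν) :=
          mul_le_mul_of_nonneg_left hle (le_of_lt h1αinv)
      _ ≤ sSup S2 := le_csSup bdd2 ⟨h', hm', fun p => hb p.1, heq1, rfl⟩
  · -- Rαε ≤ Rα + ε
    rw [hRα, hRαε]
    apply csSup_le ne2
    intro r hr
    obtain ⟨h, hm, hb, hint, rfl⟩ := hr
    set g : Ω → ℝ := fun ω => ∫ u, h (ω, u) ∂ν with hg
    have hgm : Measurable g := hm.stronglyMeasurable.integral_prod_right'.measurable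
    have hgb : ∀ ω, g ω ∈ Icc (0:ℝ) 1 := by
      intro ω
      constructor
      · exact integral_nonneg fun u => (hb (ω, u)).1
      · calc g ω ≤ ∫ _, (1:ℝ) ∂ν := by
              apply integral_mono_of_nonneg
              · filter_upwards with u; exact (hb (ω, u)).1
              · exact integrable_const 1
              · filter_upwards with u; exact (hb (ω, u)).2
          _ = 1 := by simp
    have hintable : Integrable h (P.prod ν) := by
      apply integrable_of_bdd hm
      filter_upwards with p
      rw [Real.norm_eq_abs, abs_of_nonneg (hb p).1]; exact (hb p).2
    have hgint : (∫ ω, g ω ∂P) = 1 - α := by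
      rw [← hint, integral_prod _ hintable]
    have hμprodint : Integrable (fun p : Ω × ℝ => h p * μ p.1) (P.prod ν) := by
      apply integrable_of_bdd (hm.mul (hμm.comp measurable_fst))
      filter_upwards with p
      show ‖h p * μ p.1‖ ≤ _
      rw [Real.norm_eq_abs, abs_mul, abs_of_nonneg (hb p).1]
      calc h p * |μ p.1| ≤ 1 * M := mul_le_mul (hb p).2 (hM p.1) (abs_nonneg _) zero_le_one
        _ = M := one_mul M
    have hfull : Integrable (fun p : Ω × ℝ => h p * (μ p.1 + p.2)) (P.prod ν) := by
      apply integrable_of_bdd (hm.mul ((hμm.comp measurable_fst).add measurable_snd))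
      filter_upwards [hprodae] with p hp
      show ‖h p * (μ p.1 + p.2)‖ ≤ _
      rw [Real.norm_eq_abs, abs_mul, abs_of_nonneg (hb p).1]
      calc h p * |μ p.1 + p.2| ≤ 1 * (M + ε) := by
            apply mul_le_mul (hb p).2 _ (abs_nonneg _) zero_le_one
            calc |μ p.1 + p.2| ≤ |μ p.1| + |p.2| := abs_add_le _ _
              _ ≤ M + ε := add_le_add (hM p.1) (by rw [abs_of_nonneg hp.1]; exact hp.2)
        _ = M + ε := one_mul _
    have hgμ : (∫ p, h p * μ p.1 ∂(P.prod ν)) = ∫ ω, g ω * μ ω ∂P := by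
      rw [integral_prod _ hμprodint]
      congr 1
      ext ω
      rw [hg]
      exact (integral_mul_const (μ ω) fun u => h (ω, u)).symm ▸ rfl
    have hsplit : (∫ p, h p * (μ p.1 + p.2) ∂(P.prod ν)) =
        (∫ p, h p * μ p.1 ∂(P.prod ν)) + ∫ p, h p * p.2 ∂(P.prod ν) := by
      rw [← integral_add hμprodint]
      · congr 1; ext p; ring
      · have := hfull.sub hμprodint
        apply this.congr
        filter_upwards with p
        simp only [Pi.sub_apply]
        ring
    have hnoise : (∫ p, h p * p.2 ∂(P.prod ν)) ≤ ε * (1 - α) := by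
      have : (∫ p, h p * p.2 ∂(P.prod ν)) ≤ ∫ p, h p * ε ∂(P.prod ν) := by
        apply integral_mono_ae
        · exact (hfull.sub hμprodint).congr (by
            filter_upwards with p
            simp only [Pi.sub_apply]
            ring)
        · exact hintable.mul_const ε
        · filter_upwards [hprodae] with p hp
          exact mul_le_mul_of_nonneg_left hp.2 (hb p).1
      calc (∫ p, h p * p.2 ∂(P.prod ν)) ≤ ∫ p, h p * ε ∂(P.prod ν) := this
        _ = (1 - α) * ε := by rw [integral_mul_const, hint]
        _ = ε * (1 - α) := mul_comm _ _
    have hS1mem : (1-α)⁻¹ * (∫ ω, g ω * μ ω ∂P) ∈ S1 := ⟨g, hgm, hgb, hgint, rfl⟩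
    have hle1 : (1-α)⁻¹ * (∫ ω, g ω * μ ω ∂P) ≤ sSup S1 := le_csSup bdd1 hS1mem
    calc (1-α)⁻¹ * ∫ p, h p * (μ p.1 + p.2) ∂(P.prod ν)
        = (1-α)⁻¹ * ((∫ p, h p * μ p.1 ∂(P.prod ν)) + ∫ p, h p * p.2 ∂(P.prod ν)) := by
          rw [hsplit]
      _ ≤ (1-α)⁻¹ * ((∫ ω, g ω * μ ω ∂P) + ε * (1 - α)) := by
          apply mul_le_mul_of_nonneg_left _ (le_of_lt h1αinv)
          rw [hgμ] at *
          linarith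
      _ = (1-α)⁻¹ * (∫ ω, g ω * μ ω ∂P) + ε := by
          field_simp
      _ ≤ sSup S1 + ε := by linarith
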